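/- arXiv:1305.6588 — 2 statements merged into one kernel-verified Lean document; each statement's English description precedes it below -/
import Mathlib

section
/- Let 0 < α < β and p₁, p₂ > 0 with p₁ + p₂ = 1. Fix n ≥ 1 and a real number K₀ with 0 ≤ K₀ ≤ n−1. If ω ∈ [0,1] satisfies #{ j ∈ {0,1,…,n−1} : φ^j(ω) ∈ [0,p₁) } > K₀ (i.e., the symbol α occurs more than K₀ times among α(ω), α(φω), …, α(φ^{n−1}ω)), then x_n^α ≤ x_n(ω) ≤ x^α_{⌊K₀⌋}. -/
noncomputable section

open Real MeasureTheory Set Filter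

/-- The LSV map `T_γ` on `[0,1]`: `x(1+2^γ x^γ)` on `[0,1/2]`, `2x-1` on `(1/2,1]`. -/
noncomputable def lsv (γ : ℝ) (x : ℝ) : ℝ :=
  if x ≤ 1 / 2 then x * (1 + 2 ^ γ * x ^ γ) else 2 * x - 1

/-- The left branch of the LSV map. -/
noncomputable def lsvLeft (γ : ℝ) (x : ℝ) : ℝ := x * (1 + 2 ^ γ * x ^ γ)

/-- The random parameter selection: `α` for `ω ∈ [0,p₁)`, `β` for `ω ∈ [p₁,1]`. -/
noncomputable def sel (α β p₁ : ℝ) (ω : ℝ) : ℝ := if ω < p₁ then α else β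

/-- The randomizing map `φ` on `[0,1]`. -/
noncomputable def phiMap (p₁ p₂ : ℝ) (ω : ℝ) : ℝ :=
  if ω < p₁ then ω / p₁ else (ω - p₁) / p₂

/-- The skew product `S(x,ω) = (T_{α(ω)}(x), φ(ω))`. -/
noncomputable def skew (α β p₁ p₂ : ℝ) (z : ℝ × ℝ) : ℝ × ℝ :=
  (lsv (sel α β p₁ z.2) z.1, phiMap p₁ p₂ z.2)

/-- Random iterates: `randIter n ω = T_ω^n = T_{α(φ^{n-1}ω)} ∘ ⋯ ∘ T_{α(ω)}`. -/
noncomputable def randIter (α β p₁ p₂ : ℝ) : ℕ → ℝ → ℝ → ℝ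
  | 0, _, x => x
  | n + 1, ω, x => randIter α β p₁ p₂ n (phiMap p₁ p₂ ω) (lsv (sel α β p₁ ω) x)

/-- The deterministic backward orbit `x_n^γ`: `x₀^γ = 1`, `x₁^γ = 1/2`, and for `n ≥ 2`,
`x_n^γ` is the (unique) point of `(0,1/2]` with `T_γ(x_n^γ) = x_{n-1}^γ`. -/
def IsDetBackOrbit (γ : ℝ) (x : ℕ → ℝ) : Prop :=
  x 0 = 1 ∧ x 1 = 1 / 2 ∧
    ∀ n, 2 ≤ n → x n ∈ Set.Ioc (0 : ℝ) (1 / 2) ∧ lsv γ (x n) = x (n - 1)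

/-- The random backward orbit `x_n(ω)`: `x₀(ω) = 1`, `x₁(ω) = 1/2`, and for `n ≥ 2`,
`x_n(ω)` is the (unique) point of `(0,1/2]` with `T_{α(ω)}(x_n(ω)) = x_{n-1}(φω)`. -/
def IsRandBackOrbit (α β p₁ p₂ : ℝ) (X : ℕ → ℝ → ℝ) : Prop :=
  (∀ ω, X 0 ω = 1) ∧ (∀ ω, X 1 ω = 1 / 2) ∧
    ∀ n, 2 ≤ n → ∀ ω, X n ω ∈ Set.Ioc (0 : ℝ) (1 / 2) ∧
      lsv (sel α β p₁ ω) (X n ω) = X (n - 1) (phiMap p₁ p₂ ω)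

/-- The points `x'_n(ω)`: `x'₀(ω) = 1`, `x'₁(ω) = 3/4`, and
`x'_n(ω) = (x_n(φω) + 1)/2` for `n ≥ 2`. -/
def IsRandBackOrbitPrime (p₁ p₂ : ℝ) (X X' : ℕ → ℝ → ℝ) : Prop :=
  (∀ ω, X' 0 ω = 1) ∧ (∀ ω, X' 1 ω = 3 / 4) ∧
    ∀ n, 2 ≤ n → ∀ ω, X' n ω = (X n (phiMap p₁ p₂ ω) + 1) / 2

/-- First return time of `(x,ω)` to `(1/2,1] × [0,1]` under the skew product. -/
noncomputable def returnTime (α β p₁ p₂ : ℝ) (x ω : ℝ) : ℕ :=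
  sInf {k : ℕ | 1 ≤ k ∧ 1 / 2 < randIter α β p₁ p₂ k ω x}

/- ### Auxiliary lemmas -/

lemma lsv_eq' (γ : ℝ) {x : ℝ} (hx0 : 0 ≤ x) (hx : x ≤ 1/2) :
    lsv γ x = x * (1 + (2*x) ^ γ) := by
  rw [lsv, if_pos hx, Real.mul_rpow (by norm_num) hx0]

lemma lsv_lt_lsv {γ : ℝ} (hγ : 0 ≤ γ) {x y : ℝ} (hx : 0 ≤ x) (hxy : x < y)
    (hy : y ≤ 1/2) : lsv γ x < lsv γ y := by
  rw [lsv_eq' γ hx (by linarith), lsv_eq' γ (by linarith) hy]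
  have h1 : (2*x) ^ γ ≤ (2*y) ^ γ :=
    Real.rpow_le_rpow (by linarith) (by linarith) hγ
  nlinarith [Real.rpow_nonneg (show (0:ℝ) ≤ 2*x by linarith) γ]

lemma le_of_lsv_le {γ : ℝ} (hγ : 0 ≤ γ) {x y : ℝ} (hx : 0 ≤ x) (hx2 : x ≤ 1/2)
    (hy : 0 ≤ y) (hy2 : y ≤ 1/2) (h : lsv γ x ≤ lsv γ y) : x ≤ y := by
  by_contra hc
  push_neg at hc
  exact absurd h (not_le.2 (lsv_lt_lsv hγ hy hc hx2))

lemma lsv_param {α γ : ℝ} (hγ : α ≤ γ) {x : ℝ} (hx : 0 < x)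
    (hx2 : x ≤ 1/2) : lsv γ x ≤ lsv α x := by
  rw [lsv_eq' γ hx.le hx2, lsv_eq' α hx.le hx2]
  have := Real.rpow_le_rpow_of_exponent_ge (show (0:ℝ) < 2*x by linarith)
    (by linarith) hγ
  nlinarith

lemma self_lt_lsv (γ : ℝ) {x : ℝ} (hx : 0 < x) (hx2 : x ≤ 1/2) : x < lsv γ x := by
  rw [lsv_eq' γ hx.le hx2]
  nlinarith [Real.rpow_pos_of_pos (show (0:ℝ) < 2*x by linarith) γ]

lemma phiMap_mem {p₁ p₂ : ℝ} (hp₁ : 0 < p₁) (hp₂ : 0 < p₂) (hp : p₁ + p₂ = 1)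
    {ω : ℝ} (hω : ω ∈ Set.Icc (0:ℝ) 1) : phiMap p₁ p₂ ω ∈ Set.Icc (0:ℝ) 1 := by
  obtain ⟨h0, h1⟩ := hω
  rw [phiMap]
  split
  · constructor
    · positivity
    · rw [div_le_one hp₁]; linarith
  · rename_i h
    push_neg at h
    constructor
    · apply div_nonneg (by linarith) hp₂.le
    · rw [div_le_one hp₂]; linarith

/-- Let `0 < α < β`, `p₁, p₂ > 0` with `p₁ + p₂ = 1`, `n ≥ 1` and
`0 ≤ K₀ ≤ n − 1`. If the symbol `α` occurs more than `K₀` times among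
`α(ω), α(φω), …, α(φ^{n−1}ω)`, then `x_n^α ≤ x_n(ω) ≤ x^α_{⌊K₀⌋}`. -/
theorem randBackOrbit_of_many_alpha (α β p₁ p₂ : ℝ) (hα : 0 < α) (hαβ : α < β)
    (hp₁ : 0 < p₁) (hp₂ : 0 < p₂) (hp : p₁ + p₂ = 1)
    (X : ℕ → ℝ → ℝ) (hX : IsRandBackOrbit α β p₁ p₂ X)
    (xa : ℕ → ℝ) (hxa : IsDetBackOrbit α xa)
    (n : ℕ) (hn : 1 ≤ n) (K₀ : ℝ) (hK₀ : 0 ≤ K₀) (hK₀' : K₀ ≤ (n : ℝ) - 1)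
    (ω : ℝ) (hω : ω ∈ Set.Icc (0 : ℝ) 1)
    (hcount : K₀ < (((Finset.range n).filter
      (fun j => 0 ≤ (phiMap p₁ p₂)^[j] ω ∧ (phiMap p₁ p₂)^[j] ω < p₁)).card : ℝ)) :
    xa n ≤ X n ω ∧ X n ω ≤ xa ⌊K₀⌋₊ := by
  obtain ⟨hxa0, hxa1, hxa2⟩ := hxa
  obtain ⟨hX0, hX1, hXn⟩ := hX
  -- basic properties of the deterministic orbit
  have hpos : ∀ m, 0 < xa m := by
    intro m
    match m with
    | 0 => rw [hxa0]; norm_num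
    | 1 => rw [hxa1]; norm_num
    | m + 2 => exact (hxa2 (m+2) (by omega)).1.1
  have hhalf : ∀ m, 1 ≤ m → xa m ≤ 1/2 := by
    intro m hm
    match m with
    | 1 => rw [hxa1]
    | m + 2 => exact (hxa2 (m+2) (by omega)).1.2
  have hstep : ∀ m, lsv α (xa (m+1)) = xa m := by
    intro m
    match m with
    | 0 =>
      rw [hxa1, hxa0, lsv_eq' α (by norm_num) (le_refl _)]
      norm_num
    | m + 1 =>
      have := (hxa2 (m+2) (by omega)).2
      simpa using this
  have hanti : ∀ m k : ℕ, m ≤ k → xa k ≤ xa m := by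
    have h1 : ∀ m, xa (m+1) ≤ xa m := by
      intro m
      have := self_lt_lsv α (hpos (m+1)) (hhalf (m+1) (by omega))
      rw [hstep m] at this
      linarith
    intro m k hmk
    exact antitone_nat_of_succ_le h1 hmk
  have hle1 : ∀ m, xa m ≤ 1 := by
    intro m
    match m with
    | 0 => rw [hxa0]
    | m + 1 => linarith [hhalf (m+1) (by omega)]
  -- lower bound
  have lower : ∀ m, 1 ≤ m → ∀ ω, xa m ≤ X m ω := by
    intro m
    induction m with
    | zero => omega
    | succ m ih =>
      intro _ ω
      match m with
      | 0 =>
        rw [hX1 ω, hxa1]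
      | m + 1 =>
        obtain ⟨hmem, heq⟩ := hXn (m+2) (by omega) ω
        have heq' : lsv (sel α β p₁ ω) (X (m+2) ω) = X (m+1) (phiMap p₁ p₂ ω) := by
          simpa using heq
        have hs : α ≤ sel α β p₁ ω := by
          rw [sel]; split; exacts [le_rfl, hαβ.le]
        have h1 : lsv α (xa (m+2)) ≤ lsv α (X (m+2) ω) := by
          calc lsv α (xa (m+2)) = xa (m+1) := hstep (m+1)
            _ ≤ X (m+1) (phiMap p₁ p₂ ω) := ih (by omega) _
            _ = lsv (sel α β p₁ ω) (X (m+2) ω) := heq'.symm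
            _ ≤ lsv α (X (m+2) ω) := lsv_param hs hmem.1 hmem.2
        exact le_of_lsv_le hα.le (hpos (m+2)).le (hhalf (m+2) (by omega))
          hmem.1.le hmem.2 h1
  -- upper bound
  have upper : ∀ m : ℕ, ∀ ω : ℝ, ω ∈ Set.Icc (0:ℝ) 1 →
      X (m+1) ω ≤ xa (((Finset.range m).filter
        (fun j => (phiMap p₁ p₂)^[j] ω < p₁)).card) := by
    intro m
    induction m with
    | zero =>
      intro ω _
      rw [hX1 ω]
      simp only [Finset.range_zero, Finset.filter_empty, Finset.card_empty, hxa0]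
      norm_num
    | succ m ih =>
      intro ω hωm
      obtain ⟨hmem, heq⟩ := hXn (m+2) (by omega) ω
      have heq' : lsv (sel α β p₁ ω) (X (m+2) ω) = X (m+1) (phiMap p₁ p₂ ω) := by
        simpa using heq
      have ih' := ih (phiMap p₁ p₂ ω) (phiMap_mem hp₁ hp₂ hp hωm)
      set c := ((Finset.range m).filter
        (fun j => (phiMap p₁ p₂)^[j] (phiMap p₁ p₂ ω) < p₁)).card with hc
      have hcard : ((Finset.range (m+1)).filter
          (fun j => (phiMap p₁ p₂)^[j] ω < p₁)).card
          = c + (if ω < p₁ then 1 else 0) := by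
        rw [hc, Finset.card_filter, Finset.card_filter, Finset.sum_range_succ']
        simp [Function.iterate_succ_apply]
        rw [Finset.card_filter]
        convert rfl <;> split_ifs with h
        exacts [(if_pos h).symm, (if_neg h).symm, (if_pos h).symm, (if_neg h).symm]
      rw [hcard]
      by_cases hcase : ω < p₁
      · -- α-step
        have hsel : sel α β p₁ ω = α := if_pos hcase
        rw [hsel] at heq'
        rw [if_pos hcase]
        have h1 : lsv α (X (m+2) ω) ≤ lsv α (xa (c+1)) := by
          rw [heq', hstep c]
          exact ih'
        exact le_of_lsv_le hα.le hmem.1.le hmem.2 (hpos (c+1)).le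
          (hhalf (c+1) (by omega)) h1
      · -- β-step
        rw [if_neg hcase]
        have h1 : X (m+2) ω < lsv (sel α β p₁ ω) (X (m+2) ω) :=
          self_lt_lsv _ hmem.1 hmem.2
        rw [heq'] at h1
        simpa using le_trans h1.le ih'
  -- assemble
  obtain ⟨m, rfl⟩ : ∃ m, n = m + 1 := ⟨n - 1, (Nat.succ_pred_eq_of_pos hn).symm⟩
  constructor
  · exact lower (m+1) hn ω
  · -- simplify the count hypothesis
    have hiter : ∀ j : ℕ, (phiMap p₁ p₂)^[j] ω ∈ Set.Icc (0:ℝ) 1 := by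
      intro j
      induction j with
      | zero => exact hω
      | succ j ihj =>
        rw [Function.iterate_succ_apply']
        exact phiMap_mem hp₁ hp₂ hp ihj
    have hfe : ((Finset.range (m+1)).filter
        (fun j => 0 ≤ (phiMap p₁ p₂)^[j] ω ∧ (phiMap p₁ p₂)^[j] ω < p₁))
        = ((Finset.range (m+1)).filter (fun j => (phiMap p₁ p₂)^[j] ω < p₁)) := by
      apply Finset.filter_congr
      intro j _
      simp [(hiter j).1]
    rw [hfe] at hcount
    set C := ((Finset.range (m+1)).filter
      (fun j => (phiMap p₁ p₂)^[j] ω < p₁)).card with hC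
    have hfloor : ⌊K₀⌋₊ < C := by
      have : (⌊K₀⌋₊ : ℝ) < (C : ℝ) := lt_of_le_of_lt (Nat.floor_le hK₀) hcount
      exact_mod_cast this
    have hsplit : C ≤ ((Finset.range m).filter
        (fun j => (phiMap p₁ p₂)^[j] ω < p₁)).card + 1 := by
      rw [hC, Finset.card_filter, Finset.card_filter, Finset.sum_range_succ]
      split <;> omega
    have hfloor' : ⌊K₀⌋₊ ≤ ((Finset.range m).filter
        (fun j => (phiMap p₁ p₂)^[j] ω < p₁)).card := by omega
    exact le_trans (upper m ω hω) (hanti _ _ hfloor')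
end
end

section
/- Let 0 < α < β and p₁, p₂ > 0 with p₁ + p₂ = 1. For every n ≥ 1, every ω ∈ [0,1] and every x ∈ J_n(ω): T_ω^k(x) ∈ I_{n−k}(φ^k(ω)) for each 1 ≤ k ≤ n−1 (in particular T_ω^k(x) ≤ 1/2 for 1 ≤ k ≤ n−1), and T_ω^n(x) ∈ (1/2,1]; moreover the map T_ω^n restricted to J_n(ω) is a bijection onto (1/2,1]. -/
noncomputable section

open Real MeasureTheory Set Filter

-- auxiliary lemmas

lemma lsv_of_le' {γ x : ℝ} (h : x ≤ 1/2) : lsv γ x = x * (1 + 2 ^ γ * x ^ γ) := if_pos h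
lemma lsv_of_gt' {γ x : ℝ} (h : 1/2 < x) : lsv γ x = 2*x - 1 := if_neg (not_le.2 h)

lemma lsvLeft_mono {γ : ℝ} (hγ : 0 < γ) {x y : ℝ} (hx : 0 ≤ x) (hxy : x < y) :
    x * (1 + 2 ^ γ * x ^ γ) < y * (1 + 2 ^ γ * y ^ γ) := by
  have h2 : (0:ℝ) < 2 ^ γ := Real.rpow_pos_of_pos two_pos γ
  have hxyγ : x ^ γ ≤ y ^ γ := Real.rpow_le_rpow hx hxy.le hγ.le
  have hxγ : (0:ℝ) ≤ x ^ γ := Real.rpow_nonneg hx γ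
  have h1 : (0:ℝ) < 1 + 2 ^ γ * y ^ γ := by nlinarith
  calc x * (1 + 2 ^ γ * x ^ γ) ≤ x * (1 + 2 ^ γ * y ^ γ) := by
        nlinarith [mul_nonneg (mul_nonneg hx h2.le) (sub_nonneg.2 hxyγ)]
    _ < y * (1 + 2 ^ γ * y ^ γ) := mul_lt_mul_of_pos_right hxy h1

lemma lsvLeft_mono' {γ : ℝ} (hγ : 0 < γ) {x y : ℝ} (hx : 0 ≤ x) (hxy : x ≤ y) :
    x * (1 + 2 ^ γ * x ^ γ) ≤ y * (1 + 2 ^ γ * y ^ γ) := by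
  rcases eq_or_lt_of_le hxy with rfl | h
  · exact le_refl _
  · exact (lsvLeft_mono hγ hx h).le

lemma lsv_half' (γ : ℝ) : lsv γ (1/2) = 1 := by
  rw [lsv_of_le' le_rfl, ← Real.mul_rpow (by norm_num) (by norm_num)]
  norm_num

section Orbit

variable {α β p₁ p₂ : ℝ} {X : ℕ → ℝ → ℝ}

lemma sel_pos (hα : 0 < α) (hαβ : α < β) (ω : ℝ) : 0 < sel α β p₁ ω := by
  unfold sel; split
  · exact hα
  · exact hα.trans hαβ

lemma randIter_zero (ω x : ℝ) : randIter α β p₁ p₂ 0 ω x = x := rfl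

lemma randIter_succ (n : ℕ) (ω x : ℝ) :
    randIter α β p₁ p₂ (n+1) ω x
      = randIter α β p₁ p₂ n (phiMap p₁ p₂ ω) (lsv (sel α β p₁ ω) x) := rfl

lemma X_pos (hX : IsRandBackOrbit α β p₁ p₂ X) (n : ℕ) (ω : ℝ) : 0 < X n ω := by
  match n with
  | 0 => rw [hX.1 ω]; norm_num
  | 1 => rw [hX.2.1 ω]; norm_num
  | (m+2) => exact ((hX.2.2 (m+2) (by omega) ω).1).1

lemma X_le_half (hX : IsRandBackOrbit α β p₁ p₂ X) (n : ℕ) (hn : 1 ≤ n) (ω : ℝ) :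
    X n ω ≤ 1/2 := by
  match n with
  | 1 => rw [hX.2.1 ω]
  | (m+2) => exact ((hX.2.2 (m+2) (by omega) ω).1).2

lemma lsv_X (hX : IsRandBackOrbit α β p₁ p₂ X) (n : ℕ) (ω : ℝ) :
    lsv (sel α β p₁ ω) (X (n+1) ω) = X n (phiMap p₁ p₂ ω) := by
  match n with
  | 0 => rw [hX.2.1 ω, lsv_half', hX.1]
  | (m+1) => exact (hX.2.2 (m+2) (by omega) ω).2

lemma X_lt (hα : 0 < α) (hαβ : α < β) (hX : IsRandBackOrbit α β p₁ p₂ X)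
    (n : ℕ) (ω : ℝ) : X (n+1) ω < X n ω := by
  induction n generalizing ω with
  | zero => rw [hX.1 ω, hX.2.1 ω]; norm_num
  | succ m ih =>
    by_contra h
    push_neg at h
    have h1 : X (m+1) ω ≤ 1/2 := X_le_half hX _ (by omega) ω
    have h2 : X (m+2) ω ≤ 1/2 := X_le_half hX _ (by omega) ω
    have hγ := sel_pos hα hαβ (p₁ := p₁) ω
    have := lsvLeft_mono' hγ (X_pos hX (m+1) ω).le h
    rw [← lsv_of_le' h1, ← lsv_of_le' h2, lsv_X hX m ω, lsv_X hX (m+1) ω] at this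
    exact absurd this (not_le.2 (ih (phiMap p₁ p₂ ω)))

lemma step_Ioc (hα : 0 < α) (hαβ : α < β) (hX : IsRandBackOrbit α β p₁ p₂ X)
    (m : ℕ) (ω : ℝ) {y : ℝ} (hy : y ∈ Set.Ioc (X (m+2) ω) (X (m+1) ω)) :
    lsv (sel α β p₁ ω) y ∈
      Set.Ioc (X (m+1) (phiMap p₁ p₂ ω)) (X m (phiMap p₁ p₂ ω)) ∧ y ≤ 1/2 := by
  obtain ⟨hy1, hy2⟩ := hy
  have hγ := sel_pos hα hαβ (p₁ := p₁) ω
  have h1 : X (m+1) ω ≤ 1/2 := X_le_half hX _ (by omega) ω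
  have h2 : X (m+2) ω ≤ 1/2 := X_le_half hX _ (by omega) ω
  have hy12 : y ≤ 1/2 := hy2.trans h1
  have hpos2 := X_pos hX (m+2) ω
  refine ⟨⟨?_, ?_⟩, hy12⟩
  · have := lsvLeft_mono hγ hpos2.le hy1
    rw [← lsv_of_le' h2, ← lsv_of_le' hy12, lsv_X hX (m+1) ω] at this
    exact this
  · have := lsvLeft_mono' hγ (hpos2.trans hy1).le hy2
    rw [← lsv_of_le' h1, ← lsv_of_le' hy12, lsv_X hX m ω] at this
    exact this

lemma step_Icc (hα : 0 < α) (hαβ : α < β) (hX : IsRandBackOrbit α β p₁ p₂ X)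
    (m : ℕ) (ω : ℝ) {y : ℝ} (hy : y ∈ Set.Icc (X (m+2) ω) (X (m+1) ω)) :
    lsv (sel α β p₁ ω) y ∈
      Set.Icc (X (m+1) (phiMap p₁ p₂ ω)) (X m (phiMap p₁ p₂ ω)) := by
  obtain ⟨hy1, hy2⟩ := hy
  have hγ := sel_pos hα hαβ (p₁ := p₁) ω
  have h1 : X (m+1) ω ≤ 1/2 := X_le_half hX _ (by omega) ω
  have h2 : X (m+2) ω ≤ 1/2 := X_le_half hX _ (by omega) ω
  have hy12 : y ≤ 1/2 := hy2.trans h1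
  have hpos2 := X_pos hX (m+2) ω
  constructor
  · have := lsvLeft_mono' hγ hpos2.le hy1
    rw [← lsv_of_le' h2, ← lsv_of_le' hy12, lsv_X hX (m+1) ω] at this
    exact this
  · have := lsvLeft_mono' hγ (hpos2.trans_le hy1).le hy2
    rw [← lsv_of_le' h1, ← lsv_of_le' hy12, lsv_X hX m ω] at this
    exact this

lemma randIter_mem (hα : 0 < α) (hαβ : α < β) (hX : IsRandBackOrbit α β p₁ p₂ X)
    (m : ℕ) : ∀ (ω : ℝ) {y : ℝ}, y ∈ Set.Ioc (X (m+1) ω) (X m ω) →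
    randIter α β p₁ p₂ m ω y ∈ Set.Ioc (1/2 : ℝ) 1 := by
  induction m with
  | zero =>
    intro ω y hy
    rw [hX.2.1 ω, hX.1 ω] at hy
    exact hy
  | succ m ih =>
    intro ω y hy
    rw [randIter_succ]
    exact ih _ (step_Ioc hα hαβ hX m ω hy).1

lemma randIter_shift (hα : 0 < α) (hαβ : α < β) (hX : IsRandBackOrbit α β p₁ p₂ X)
    (k : ℕ) : ∀ (m : ℕ) (ω : ℝ) {y : ℝ},
    y ∈ Set.Ioc (X (m+1+k) ω) (X (m+k) ω) →
    randIter α β p₁ p₂ k ω y ∈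
      Set.Ioc (X (m+1) ((phiMap p₁ p₂)^[k] ω)) (X m ((phiMap p₁ p₂)^[k] ω)) := by
  induction k with
  | zero => intro m ω y hy; simpa [randIter_zero] using hy
  | succ k ih =>
    intro m ω y hy
    have e1 : m+1+(k+1) = (m+k)+2 := by omega
    have e2 : m+(k+1) = (m+k)+1 := by omega
    rw [e1, e2] at hy
    have hstep := (step_Ioc hα hαβ hX (m+k) ω hy).1
    have e3 : m+k+1 = m+1+k := by omega
    have e4 : m+k = m+k := rfl
    rw [e3] at hstep
    rw [randIter_succ, Function.iterate_succ_apply]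
    exact ih m (phiMap p₁ p₂ ω) hstep

lemma randIter_strictMono (hα : 0 < α) (hαβ : α < β) (hX : IsRandBackOrbit α β p₁ p₂ X)
    (m : ℕ) : ∀ (ω : ℝ) {x y : ℝ}, x ∈ Set.Ioc (X (m+1) ω) (X m ω) →
    y ∈ Set.Ioc (X (m+1) ω) (X m ω) → x < y →
    randIter α β p₁ p₂ m ω x < randIter α β p₁ p₂ m ω y := by
  induction m with
  | zero => intro ω x y _ _ h; simpa [randIter_zero] using h
  | succ m ih =>
    intro ω x y hx hy hxy
    have hsx := step_Ioc hα hαβ hX m ω hx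
    have hsy := step_Ioc hα hαβ hX m ω hy
    have hγ := sel_pos hα hαβ (p₁ := p₁) ω
    have hx0 : 0 < x := (X_pos hX (m+2) ω).trans hx.1
    have hlt : lsv (sel α β p₁ ω) x < lsv (sel α β p₁ ω) y := by
      rw [lsv_of_le' hsx.2, lsv_of_le' hsy.2]
      exact lsvLeft_mono hγ hx0.le hxy
    rw [randIter_succ, randIter_succ]
    exact ih _ hsx.1 hsy.1 hlt

lemma randIter_contOn (hα : 0 < α) (hαβ : α < β) (hX : IsRandBackOrbit α β p₁ p₂ X)
    (m : ℕ) : ∀ (ω : ℝ),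
    ContinuousOn (randIter α β p₁ p₂ m ω) (Set.Icc (X (m+1) ω) (X m ω)) := by
  induction m with
  | zero => intro ω; exact continuousOn_id
  | succ m ih =>
    intro ω
    have hγ := sel_pos hα hαβ (p₁ := p₁) ω
    set γ := sel α β p₁ ω with hγdef
    have h1 : X (m+1) ω ≤ 1/2 := X_le_half hX _ (by omega) ω
    have hpos2 := X_pos hX (m+2) ω
    have hcl : ContinuousOn (lsv γ) (Set.Icc (X (m+2) ω) (X (m+1) ω)) := by
      apply ContinuousOn.congr (f := fun x : ℝ => x * (1 + 2 ^ γ * x ^ γ))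
      · apply continuousOn_of_forall_continuousAt
        intro x hx
        have hx0 : 0 < x := hpos2.trans_le hx.1
        exact continuousAt_id.mul
          (continuousAt_const.add (continuousAt_const.mul
            (Real.continuousAt_rpow_const x γ (Or.inl hx0.ne'))))
      · intro x hx
        exact lsv_of_le' (hx.2.trans h1)
    have hmaps : Set.MapsTo (lsv γ) (Set.Icc (X (m+2) ω) (X (m+1) ω))
        (Set.Icc (X (m+1) (phiMap p₁ p₂ ω)) (X m (phiMap p₁ p₂ ω))) :=
      fun y hy => step_Icc hα hαβ hX m ω hy
    exact ((ih (phiMap p₁ p₂ ω)).comp hcl hmaps).congr (fun x _ => rfl)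

lemma randIter_X_self (hα : 0 < α) (hαβ : α < β) (hX : IsRandBackOrbit α β p₁ p₂ X)
    (m : ℕ) : ∀ (ω : ℝ), randIter α β p₁ p₂ m ω (X m ω) = 1 := by
  induction m with
  | zero => intro ω; rw [randIter_zero, hX.1 ω]
  | succ m ih => intro ω; rw [randIter_succ, lsv_X hX m ω]; exact ih _

lemma randIter_X_succ (hα : 0 < α) (hαβ : α < β) (hX : IsRandBackOrbit α β p₁ p₂ X)
    (m : ℕ) : ∀ (ω : ℝ), randIter α β p₁ p₂ m ω (X (m+1) ω) = 1/2 := by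
  induction m with
  | zero => intro ω; rw [randIter_zero, hX.2.1 ω]
  | succ m ih => intro ω; rw [randIter_succ, lsv_X hX (m+1) ω]; exact ih _

lemma Xprime_eq {X' : ℕ → ℝ → ℝ} (hX : IsRandBackOrbit α β p₁ p₂ X)
    (hX' : IsRandBackOrbitPrime p₁ p₂ X X') (n : ℕ) (ω : ℝ) :
    X' n ω = (X n (phiMap p₁ p₂ ω) + 1) / 2 := by
  match n with
  | 0 => rw [hX'.1 ω, hX.1]; norm_num
  | 1 => rw [hX'.2.1 ω, hX.2.1]; norm_num
  | (m+2) => exact hX'.2.2 (m+2) (by omega) ω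

end Orbit

/-- For `0 < α < β`, `p₁, p₂ > 0` with `p₁ + p₂ = 1`, `n ≥ 1`,
`ω ∈ [0,1]` and `x ∈ J_n(ω)`: `T_ω^k(x) ∈ I_{n−k}(φ^k ω)` (in particular `T_ω^k(x) ≤ 1/2`)
for `1 ≤ k ≤ n−1`, `T_ω^n(x) ∈ (1/2,1]`, and `T_ω^n` maps `J_n(ω)` bijectively onto
`(1/2,1]`. -/
theorem Jn_returns_in_n_steps (α β p₁ p₂ : ℝ) (hα : 0 < α) (hαβ : α < β)
    (hp₁ : 0 < p₁) (hp₂ : 0 < p₂) (hp : p₁ + p₂ = 1)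
    (X X' : ℕ → ℝ → ℝ) (hX : IsRandBackOrbit α β p₁ p₂ X)
    (hX' : IsRandBackOrbitPrime p₁ p₂ X X')
    (n : ℕ) (hn : 1 ≤ n) (ω : ℝ) (hω : ω ∈ Set.Icc (0 : ℝ) 1) :
    (∀ x ∈ Set.Ioc (X' n ω) (X' (n - 1) ω),
      (∀ k : ℕ, 1 ≤ k → k ≤ n - 1 →
        randIter α β p₁ p₂ k ω x ∈
          Set.Ioc (X (n - k + 1) ((phiMap p₁ p₂)^[k] ω)) (X (n - k) ((phiMap p₁ p₂)^[k] ω))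
        ∧ randIter α β p₁ p₂ k ω x ≤ 1 / 2) ∧
      randIter α β p₁ p₂ n ω x ∈ Set.Ioc (1 / 2 : ℝ) 1) ∧
    Set.BijOn (fun x => randIter α β p₁ p₂ n ω x)
      (Set.Ioc (X' n ω) (X' (n - 1) ω)) (Set.Ioc (1 / 2 : ℝ) 1) := by
  obtain ⟨j, rfl⟩ : ∃ j, n = j + 1 := ⟨n - 1, by omega⟩
  have hj1 : j + 1 - 1 = j := by omega
  rw [hj1]
  set φω := phiMap p₁ p₂ ω with hφω
  set a := X' (j+1) ω with hadef
  set b := X' j ω with hbdef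
  have ha : a = (X (j+1) φω + 1) / 2 := Xprime_eq hX hX' (j+1) ω
  have hb : b = (X j φω + 1) / 2 := Xprime_eq hX hX' j ω
  have hXj1pos := X_pos hX (j+1) φω
  have hXlt : X (j+1) φω < X j φω := X_lt hα hαβ hX j φω
  have ha2 : 1/2 < a := by rw [ha]; linarith
  have hab : a < b := by rw [ha, hb]; linarith
  -- first step
  have hD : ∀ {x : ℝ}, x ∈ Set.Ioc a b →
      lsv (sel α β p₁ ω) x ∈ Set.Ioc (X (j+1) φω) (X j φω) := by
    intro x hx
    have hx2 : 1/2 < x := ha2.trans hx.1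
    rw [lsv_of_gt' hx2]
    constructor
    · have := hx.1; rw [ha] at this; linarith
    · have := hx.2; rw [hb] at this; linarith
  have hDcc : ∀ {x : ℝ}, x ∈ Set.Icc a b →
      lsv (sel α β p₁ ω) x ∈ Set.Icc (X (j+1) φω) (X j φω) := by
    intro x hx
    have hx2 : 1/2 < x := ha2.trans_le hx.1
    rw [lsv_of_gt' hx2]
    constructor
    · have := hx.1; rw [ha] at this; linarith
    · have := hx.2; rw [hb] at this; linarith
  have part1 : ∀ x ∈ Set.Ioc a b,
      (∀ k : ℕ, 1 ≤ k → k ≤ j + 1 - 1 →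
        randIter α β p₁ p₂ k ω x ∈
          Set.Ioc (X (j + 1 - k + 1) ((phiMap p₁ p₂)^[k] ω))
            (X (j + 1 - k) ((phiMap p₁ p₂)^[k] ω))
        ∧ randIter α β p₁ p₂ k ω x ≤ 1 / 2) ∧
      randIter α β p₁ p₂ (j+1) ω x ∈ Set.Ioc (1 / 2 : ℝ) 1 := by
    intro x hx
    have hlsv := hD hx
    constructor
    · intro k hk1 hk2
      obtain ⟨i, rfl⟩ : ∃ i, k = i + 1 := ⟨k - 1, by omega⟩
      have hij : i + 1 ≤ j := by omega
      set m := j - i with hm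
      have e1 : j + 1 = m + 1 + i := by omega
      have e2 : j = m + i := by omega
      have hmem : lsv (sel α β p₁ ω) x ∈ Set.Ioc (X (m+1+i) φω) (X (m+i) φω) := by
        rw [← e1, ← e2]; exact hlsv
      have hres := randIter_shift hα hαβ hX i m φω hmem
      have e3 : j + 1 - (i+1) + 1 = m + 1 := by omega
      have e4 : j + 1 - (i+1) = m := by omega
      rw [e3, e4, randIter_succ, Function.iterate_succ_apply]
      refine ⟨hres, ?_⟩
      exact hres.2.trans (X_le_half hX m (by omega) _)
    · rw [randIter_succ]
      exact randIter_mem hα hαβ hX j φω hlsv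
  refine ⟨part1, ?_, ?_, ?_⟩
  · -- MapsTo
    intro x hx
    exact (part1 x hx).2
  · -- InjOn
    have hsm : StrictMonoOn (fun x => randIter α β p₁ p₂ (j+1) ω x) (Set.Ioc a b) := by
      intro x hx y hy hxy
      have hlx := hD hx
      have hly := hD hy
      have hlt : lsv (sel α β p₁ ω) x < lsv (sel α β p₁ ω) y := by
        rw [lsv_of_gt' (ha2.trans hx.1), lsv_of_gt' (ha2.trans hy.1)]
        linarith
      simp only [randIter_succ]
      exact randIter_strictMono hα hαβ hX j φω hlx hly hlt
    exact hsm.injOn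
  · -- SurjOn
    have hcont : ContinuousOn (fun x => randIter α β p₁ p₂ (j+1) ω x) (Set.Icc a b) := by
      have hcl : ContinuousOn (lsv (sel α β p₁ ω)) (Set.Icc a b) := by
        apply ContinuousOn.congr (f := fun x : ℝ => 2 * x - 1)
        · fun_prop
        · intro x hx
          exact lsv_of_gt' (ha2.trans_le hx.1)
      exact ((randIter_contOn hα hαβ hX j φω).comp hcl
        (fun x hx => hDcc hx)).congr (fun x _ => rfl)
    have hFa : randIter α β p₁ p₂ (j+1) ω a = 1/2 := by
      rw [randIter_succ, lsv_of_gt' ha2]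
      have : 2 * a - 1 = X (j+1) φω := by rw [ha]; ring
      rw [this]
      exact randIter_X_succ hα hαβ hX j φω
    have hFb : randIter α β p₁ p₂ (j+1) ω b = 1 := by
      rw [randIter_succ, lsv_of_gt' (ha2.trans hab)]
      have : 2 * b - 1 = X j φω := by rw [hb]; ring
      rw [this]
      exact randIter_X_self hα hαβ hX j φω
    intro t ht
    have := intermediate_value_Ioc hab.le hcont
    rw [hFa, hFb] at this
    exact this ht
end
end
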